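/- Let X = (I, P) and Y = (J, Q) be PCSs and let s, s' : (Multiset I) × J → ℝ≥0 be Kleisli morphisms from P to Q. If ŝ(u) = ŝ'(u) for every u ∈ P, then s = s' as matrices, i.e., s_{(μ,b)} = s'_{(μ,b)} for all finite multisets μ over I and all b ∈ J. -/

import Mathlib

open scoped NNReal ENNReal

/-- The pairing `⟨u,u'⟩ = ∑' i, u i * u' i` in `[0,∞]`. -/
noncomputable def pairing {I : Type*} (u u' : I → ℝ≥0) : ℝ≥0∞ :=
  ∑' i, (u i : ℝ≥0∞) * (u' i : ℝ≥0∞)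

/-- The polar of a set of nonnegative vectors. -/
def polar {I : Type*} (X : Set (I → ℝ≥0)) : Set (I → ℝ≥0) :=
  {u' | ∀ u ∈ X, pairing u u' ≤ 1}

/-- A probabilistic coherence space structure on the set `P`. -/
def IsPCS {I : Type*} (P : Set (I → ℝ≥0)) : Prop :=
  polar (polar P) = P ∧
  (∀ a : I, ∃ u ∈ P, 0 < u a) ∧
  (∀ a : I, ∃ A : ℝ≥0, 0 < A ∧ ∀ u ∈ P, u a ≤ A)

/-- `u^μ`: the product, with multiplicities, of the values `u a` for `a ∈ μ`. -/
noncomputable def mpow {I : Type*} (u : I → ℝ≥0) (μ : Multiset I) : ℝ≥0 := (μ.map u).prod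

/-- Kleisli application `ŝ(u)_b = ∑' μ, s (μ,b) * u^μ` in `[0,∞]`. -/
noncomputable def kApp {I J : Type*} (s : Multiset I × J → ℝ≥0) (u : I → ℝ≥0) (b : J) : ℝ≥0∞ :=
  ∑' μ : Multiset I, (s (μ, b) : ℝ≥0∞) * (mpow u μ : ℝ≥0∞)

/-- `s` is a Kleisli morphism from `P` to `Q`. -/
def IsKleisli {I J : Type*} (s : Multiset I × J → ℝ≥0)
    (P : Set (I → ℝ≥0)) (Q : Set (J → ℝ≥0)) : Prop :=
  ∀ u ∈ P, (∀ b, kApp s u b ≠ ⊤) ∧ (fun b => (kApp s u b).toNNReal) ∈ Q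

lemma my_tsum_split (f : ℕ → ℝ≥0∞) (k : ℕ) :
    ∑' j, f j = (∑ j ∈ Finset.range k, f j) + ∑' m, f (m + k) :=
  (Summable.sum_add_tsum_nat_add' (f := f) (k := k) ENNReal.summable).symm

lemma my_regroup {α : Type*} (f : α → ℝ≥0∞) (g : α → ℕ) (t : ℝ≥0∞) :
    ∑' a, f a * t ^ g a = ∑' n, (∑' a, if g a = n then f a else 0) * t ^ n := by
  have : ∀ n : ℕ, (∑' a, if g a = n then f a else 0) * t ^ n
      = ∑' a, if g a = n then f a * t ^ g a else 0 := by
    intro n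
    rw [← ENNReal.tsum_mul_right]
    refine tsum_congr fun a => ?_
    split_ifs with h
    · rw [h]
    · rw [zero_mul]
  simp_rw [this]
  rw [ENNReal.tsum_comm]
  refine tsum_congr fun a => ?_
  rw [tsum_eq_single (g a) (fun n hn => if_neg (fun h => hn h.symm)), if_pos rfl]

lemma my_coeff_unique (c d : ℕ → ℝ≥0∞) (hc : ∑' n, c n ≠ ⊤) (hd : ∑' n, d n ≠ ⊤)
    (h : ∀ t : ℝ≥0∞, 0 < t → t ≤ 1 → ∑' n, c n * t ^ n = ∑' n, d n * t ^ n) : c = d := by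
  have key : ∀ p q : ℕ → ℝ≥0∞, ∀ n : ℕ, (∑' j, q j) ≠ ⊤ →
      (∀ t : ℝ≥0∞, 0 < t → t ≤ 1 →
        p n * t ^ n + (∑' m, p (m + (n + 1)) * t ^ (m + (n + 1)))
          = q n * t ^ n + (∑' m, q (m + (n + 1)) * t ^ (m + (n + 1)))) → p n ≤ q n := by
    intro p q n hq heq
    set M : ℝ≥0∞ := ∑' j, q j with hM
    have hMtop : M ≠ ⊤ := hq
    have tail_le : ∀ t : ℝ≥0∞, 0 < t → t ≤ 1 →
        (∑' m, q (m + (n + 1)) * t ^ (m + (n + 1))) ≤ t ^ (n + 1) * M := by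
      intro t ht0 ht1
      calc ∑' m, q (m + (n + 1)) * t ^ (m + (n + 1))
          ≤ ∑' m, q (m + (n + 1)) * t ^ (n + 1) := by
            refine ENNReal.tsum_le_tsum fun m => ?_
            refine mul_le_mul_right ?_ _
            exact pow_le_pow_of_le_one zero_le ht1 (by omega)
        _ = (∑' m, q (m + (n + 1))) * t ^ (n + 1) := ENNReal.tsum_mul_right
        _ ≤ M * t ^ (n + 1) := by
            refine mul_le_mul_left ?_ _
            exact ENNReal.tsum_comp_le_tsum_of_injective (add_left_injective (n + 1)) q
        _ = t ^ (n + 1) * M := mul_comm _ _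
    have step : ∀ t : ℝ≥0∞, 0 < t → t ≤ 1 → p n ≤ q n + t * M := by
      intro t ht0 ht1
      have htn_ne : t ^ n ≠ 0 := pow_ne_zero n ht0.ne'
      have htn_top : t ^ n ≠ ⊤ := by
        exact (pow_le_one₀ zero_le ht1).trans_lt ENNReal.one_lt_top |>.ne
      have h1 : p n * t ^ n ≤ (q n + t * M) * t ^ n := by
        calc p n * t ^ n ≤ p n * t ^ n + (∑' m, p (m + (n + 1)) * t ^ (m + (n + 1))) :=
              le_self_add
          _ = q n * t ^ n + (∑' m, q (m + (n + 1)) * t ^ (m + (n + 1))) := heq t ht0 ht1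
          _ ≤ q n * t ^ n + t ^ (n + 1) * M := add_le_add_right (tail_le t ht0 ht1) _
          _ = (q n + t * M) * t ^ n := by ring
      exact (ENNReal.mul_le_mul_iff_left htn_ne htn_top).mp h1
    refine ENNReal.le_of_forall_pos_le_add fun ε hε hqn => ?_
    set t₀ : ℝ≥0∞ := min 1 ((ε : ℝ≥0∞) * (M + 1)⁻¹) with ht₀
    have hM1_ne0 : M + 1 ≠ 0 := by simp
    have hM1_top : M + 1 ≠ ⊤ := by simp [hMtop]
    have ht₀0 : 0 < t₀ := by
      refine lt_min one_pos ?_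
      exact ENNReal.mul_pos (by exact_mod_cast hε.ne') (ENNReal.inv_ne_zero.mpr hM1_top)
    have ht₀1 : t₀ ≤ 1 := min_le_left _ _
    have hle : p n ≤ q n + t₀ * M := step t₀ ht₀0 ht₀1
    refine hle.trans (add_le_add_right ?_ _)
    calc t₀ * M ≤ (ε : ℝ≥0∞) * (M + 1)⁻¹ * M := mul_le_mul_left (min_le_right _ _) _
      _ = (ε : ℝ≥0∞) * ((M + 1)⁻¹ * M) := mul_assoc _ _ _
      _ ≤ (ε : ℝ≥0∞) * 1 := by
          refine mul_le_mul_right ?_ _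
          exact (mul_le_mul_right le_self_add _).trans_eq
            (ENNReal.inv_mul_cancel hM1_ne0 hM1_top)
      _ = (ε : ℝ≥0∞) := mul_one _
  funext n
  induction n using Nat.strong_induction_on with
  | _ n IH =>
    have heq2 : ∀ t : ℝ≥0∞, 0 < t → t ≤ 1 →
        c n * t ^ n + (∑' m, c (m + (n + 1)) * t ^ (m + (n + 1)))
          = d n * t ^ n + (∑' m, d (m + (n + 1)) * t ^ (m + (n + 1))) := by
      intro t ht0 ht1
      have hsplit : ∀ e : ℕ → ℝ≥0∞, ∑' j, e j * t ^ j
          = (∑ j ∈ Finset.range n, e j * t ^ j)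
            + (e n * t ^ n + ∑' m, e (m + (n + 1)) * t ^ (m + (n + 1))) := by
        intro e
        rw [my_tsum_split (fun j => e j * t ^ j) (n + 1), Finset.sum_range_succ, add_assoc]
      have hpre_ne : (∑ j ∈ Finset.range n, c j * t ^ j) ≠ ⊤ := by
        refine (lt_of_le_of_lt ?_ (lt_top_iff_ne_top.mpr hc)).ne
        calc ∑ j ∈ Finset.range n, c j * t ^ j ≤ ∑ j ∈ Finset.range n, c j := by
              refine Finset.sum_le_sum fun j _ => ?_
              calc c j * t ^ j ≤ c j * 1 :=
                    mul_le_mul_right (pow_le_one₀ zero_le ht1) _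
                _ = c j := mul_one _
          _ ≤ ∑' j, c j := ENNReal.sum_le_tsum _
      have hpre : (∑ j ∈ Finset.range n, c j * t ^ j)
          = ∑ j ∈ Finset.range n, d j * t ^ j := by
        refine Finset.sum_congr rfl fun j hj => ?_
        rw [IH j (Finset.mem_range.mp hj)]
      have hh := h t ht0 ht1
      rw [hsplit c, hsplit d, hpre] at hh
      rw [hpre] at hpre_ne
      exact (ENNReal.add_right_inj hpre_ne).mp hh
    exact le_antisymm (key c d n hd heq2)
      (key d c n hc (fun t ht0 ht1 => (heq2 t ht0 ht1).symm))

lemma my_digits (N : ℕ) (K : ℕ) (g h : ℕ → ℕ) (hg : ∀ j, g j < N) (hh : ∀ j, h j < N)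
    (heq : ∑ j ∈ Finset.range K, g j * N ^ j = ∑ j ∈ Finset.range K, h j * N ^ j) :
    ∀ j < K, g j = h j := by
  induction K generalizing g h with
  | zero => intro j hj; omega
  | succ K IH =>
    have expand : ∀ e : ℕ → ℕ, ∑ j ∈ Finset.range (K + 1), e j * N ^ j
        = e 0 + N * ∑ j ∈ Finset.range K, e (j + 1) * N ^ j := by
      intro e
      rw [Finset.sum_range_succ']
      simp only [pow_zero, mul_one, pow_succ]
      rw [Finset.mul_sum]
      rw [Nat.add_comm]
      congr 1
      refine Finset.sum_congr rfl fun j _ => by ring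
    rw [expand g, expand h] at heq
    have h0 : g 0 = h 0 := by
      have := congrArg (· % N) heq
      simpa [Nat.add_mul_mod_self_left, Nat.mod_eq_of_lt (hg 0), Nat.mod_eq_of_lt (hh 0)]
        using this
    have hN : 0 < N := lt_of_le_of_lt (Nat.zero_le _) (hg 0)
    have hrest : ∑ j ∈ Finset.range K, g (j + 1) * N ^ j
        = ∑ j ∈ Finset.range K, h (j + 1) * N ^ j := by
      rw [h0] at heq
      have := Nat.add_left_cancel heq
      exact Nat.eq_of_mul_eq_mul_left hN this
    intro j hj
    match j with
    | 0 => exact h0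
    | j + 1 =>
      exact IH (fun i => g (i + 1)) (fun i => h (i + 1)) (fun i => hg _) (fun i => hh _)
        hrest j (by omega)

lemma my_prod_map_pow {I : Type*} (x : ℝ≥0) (w : I → ℕ) (μ : Multiset I) :
    (μ.map fun a => x ^ w a).prod = x ^ (μ.map w).sum := by
  induction μ using Multiset.induction with
  | empty => simp
  | cons a μ ih => simp [ih, pow_add]

theorem kleisli_ext {I J : Type*} [Countable I] [Countable J]
    (P : Set (I → ℝ≥0)) (Q : Set (J → ℝ≥0)) (hP : IsPCS P) (hQ : IsPCS Q)
    (s s' : Multiset I × J → ℝ≥0) (hs : IsKleisli s P Q) (hs' : IsKleisli s' P Q)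
    (h : ∀ u ∈ P, ∀ b, kApp s u b = kApp s' u b) :
    s = s' := by
  classical
  obtain ⟨hpolar, hpos, -⟩ := hP
  obtain ⟨ι, hι⟩ := exists_injective_nat I
  have hB : ∀ a : I, ∃ B : ℝ≥0, ∀ u' ∈ polar P, u' a ≤ B := by
    intro a
    obtain ⟨u, huP, hua⟩ := hpos a
    refine ⟨(u a)⁻¹, fun u' hu' => ?_⟩
    have h1 : (u a : ℝ≥0∞) * (u' a : ℝ≥0∞) ≤ 1 :=
      le_trans (ENNReal.le_tsum a) (hu' u huP)
    rw [← ENNReal.coe_mul, ← ENNReal.coe_one, ENNReal.coe_le_coe] at h1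
    rw [NNReal.le_inv_iff_mul_le hua.ne']
    rwa [mul_comm] at h1
  choose B hB' using hB
  funext p
  obtain ⟨μ₀, b⟩ := p
  set n₀ : ℕ := Multiset.card μ₀ with hn₀
  set N : ℕ := n₀ + 1 with hNdef
  set F : Finset I := μ₀.toFinset with hF
  set S : ℝ≥0 := ∑ a ∈ F, B a with hS
  set ε : ℝ≥0 := (S + 1)⁻¹ with hεdef
  have hε0 : 0 < ε := by
    rw [hεdef]
    positivity
  -- membership criterion
  have hmem : ∀ v : I → ℝ≥0, (∀ a, a ∉ F → v a = 0) → (∀ a, v a ≤ ε) → v ∈ P := by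
    intro v hv0 hvε
    rw [← hpolar]
    intro u' hu'
    have hps : pairing u' v = ∑ a ∈ F, (u' a : ℝ≥0∞) * (v a : ℝ≥0∞) := by
      refine tsum_eq_sum fun a ha => by simp [hv0 a ha]
    rw [hps]
    calc ∑ a ∈ F, (u' a : ℝ≥0∞) * (v a : ℝ≥0∞) ≤ ∑ a ∈ F, (B a : ℝ≥0∞) * (ε : ℝ≥0∞) := by
          refine Finset.sum_le_sum fun a _ => ?_
          exact mul_le_mul' (by exact_mod_cast hB' a u' hu') (by exact_mod_cast hvε a)
      _ = ((S * ε : ℝ≥0) : ℝ≥0∞) := by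
          rw [← Finset.sum_mul, hS]
          push_cast
          rfl
      _ ≤ 1 := by
          rw [← ENNReal.coe_one, ENNReal.coe_le_coe, hεdef]
          calc S * (S + 1)⁻¹ ≤ (S + 1) * (S + 1)⁻¹ := mul_le_mul_left le_self_add _
            _ = 1 := mul_inv_cancel₀ (by positivity)
  -- the test vectors
  set w : I → ℕ := fun a => N ^ ι a with hw
  set degw : Multiset I → ℕ := fun μ => (μ.map w).sum with hdegw
  set U : ℝ≥0 → ℝ≥0 → I → ℝ≥0 :=
    fun t x a => if a ∈ F then ε * (t * x ^ w a) else 0 with hU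
  have hUmem : ∀ t x : ℝ≥0, t ≤ 1 → x ≤ 1 → U t x ∈ P := by
    intro t x ht hx
    refine hmem _ (fun a ha => by simp [hU, ha]) fun a => ?_
    by_cases ha : a ∈ F
    · simp only [hU, if_pos ha]
      calc ε * (t * x ^ w a) ≤ ε * (1 * 1) := by
            refine mul_le_mul_right (mul_le_mul' ht ?_) _
            exact pow_le_one₀ zero_le hx
        _ = ε := by ring
    · simp [hU, ha]
  -- coefficients
  set C : (Multiset I × J → ℝ≥0) → Multiset I → ℝ≥0∞ :=
    fun r μ => if ∀ a ∈ μ, a ∈ F then (r (μ, b) : ℝ≥0∞) * (ε : ℝ≥0∞) ^ Multiset.card μ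
      else 0 with hC
  have key : ∀ (r : Multiset I × J → ℝ≥0) (t x : ℝ≥0), kApp r (U t x) b
      = ∑' μ : Multiset I,
          (C r μ * (x : ℝ≥0∞) ^ degw μ) * (t : ℝ≥0∞) ^ Multiset.card μ := by
    intro r t x
    refine tsum_congr fun μ => ?_
    by_cases hμ : ∀ a ∈ μ, a ∈ F
    · have hmpow : mpow (U t x) μ = ε ^ Multiset.card μ * (t ^ Multiset.card μ * x ^ degw μ) := by
        unfold mpow
        have hcg : μ.map (U t x) = μ.map (fun a => ε * (t * x ^ w a)) :=
          Multiset.map_congr rfl fun a ha => by simp [hU, hμ a ha]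
        rw [hcg, Multiset.prod_map_mul, Multiset.map_const', Multiset.prod_replicate,
          Multiset.prod_map_mul, Multiset.map_const', Multiset.prod_replicate,
          my_prod_map_pow]
      rw [hmpow, hC]
      simp only [if_pos hμ]
      push_cast
      ring
    · have hμ' := hμ
      push_neg at hμ'
      obtain ⟨a, haμ, haF⟩ := hμ'
      have hz : mpow (U t x) μ = 0 := by
        unfold mpow
        refine Multiset.prod_eq_zero ?_
        refine Multiset.mem_map.mpr ⟨a, haμ, ?_⟩
        simp [hU, haF]
      rw [hz, hC]
      simp only [if_neg hμ]
      simp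
  -- finiteness at t = x = 1
  have hfin : ∀ (r : Multiset I × J → ℝ≥0), IsKleisli r P Q → ∀ t x : ℝ≥0, t ≤ 1 → x ≤ 1 →
      (∑' μ : Multiset I,
        (C r μ * (x : ℝ≥0∞) ^ degw μ) * (t : ℝ≥0∞) ^ Multiset.card μ) ≠ ⊤ := by
    intro r hr t x ht hx
    rw [← key r t x]
    exact (hr _ (hUmem t x ht hx)).1 b
  -- Step A: grading by total degree
  have stepA : ∀ x : ℝ≥0, x ≤ 1 → ∀ n : ℕ,
      (∑' μ : Multiset I, if Multiset.card μ = n then C s μ * (x : ℝ≥0∞) ^ degw μ else 0)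
      = ∑' μ : Multiset I, if Multiset.card μ = n then C s' μ * (x : ℝ≥0∞) ^ degw μ else 0 := by
    intro x hx
    have hceq := my_coeff_unique
      (fun n => ∑' μ : Multiset I, if Multiset.card μ = n then C s μ * (x : ℝ≥0∞) ^ degw μ else 0)
      (fun n => ∑' μ : Multiset I, if Multiset.card μ = n then C s' μ * (x : ℝ≥0∞) ^ degw μ else 0)
      ?_ ?_ ?_
    · exact fun n => congrFun hceq n
    · -- finiteness for s
      have h1 := my_regroup (fun μ : Multiset I => C s μ * (x : ℝ≥0∞) ^ degw μ)
        (fun μ => Multiset.card μ) 1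
      simp only [one_pow, mul_one] at h1
      rw [← h1]
      simpa using hfin s hs 1 x le_rfl hx
    · have h1 := my_regroup (fun μ : Multiset I => C s' μ * (x : ℝ≥0∞) ^ degw μ)
        (fun μ => Multiset.card μ) 1
      simp only [one_pow, mul_one] at h1
      rw [← h1]
      simpa using hfin s' hs' 1 x le_rfl hx
    · intro T hT0 hT1
      lift T to ℝ≥0 using (hT1.trans_lt ENNReal.one_lt_top).ne with t ht
      have ht1 : t ≤ 1 := by exact_mod_cast hT1
      have ht0 : 0 < t := by exact_mod_cast hT0
      rw [← my_regroup (fun μ : Multiset I => C s μ * (x : ℝ≥0∞) ^ degw μ)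
        (fun μ => Multiset.card μ) (t : ℝ≥0∞),
        ← my_regroup (fun μ : Multiset I => C s' μ * (x : ℝ≥0∞) ^ degw μ)
        (fun μ => Multiset.card μ) (t : ℝ≥0∞), ← key s t x, ← key s' t x]
      exact h _ (hUmem t x ht1 hx) b
  -- Step B: within degree n₀, grade by weighted degree
  set e : (Multiset I × J → ℝ≥0) → ℕ → ℝ≥0∞ := fun r d =>
    ∑' μ : Multiset I, if Multiset.card μ = n₀ ∧ degw μ = d then C r μ else 0 with he
  have hB_regroup : ∀ (r : Multiset I × J → ℝ≥0) (x : ℝ≥0),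
      (∑' μ : Multiset I, if Multiset.card μ = n₀ then C r μ * (x : ℝ≥0∞) ^ degw μ else 0)
      = ∑' d : ℕ, e r d * (x : ℝ≥0∞) ^ d := by
    intro r x
    have h1 := my_regroup (fun μ : Multiset I => if Multiset.card μ = n₀ then C r μ else 0)
      degw (x : ℝ≥0∞)
    have h2 : (∑' μ : Multiset I, (if Multiset.card μ = n₀ then C r μ else 0) * (x : ℝ≥0∞) ^ degw μ)
        = ∑' μ : Multiset I, if Multiset.card μ = n₀ then C r μ * (x : ℝ≥0∞) ^ degw μ else 0 := by
      refine tsum_congr fun μ => ?_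
      split_ifs <;> simp
    rw [← h2, h1, he]
    refine tsum_congr fun d => ?_
    congr 1
    refine tsum_congr fun μ => ?_
    by_cases h3 : degw μ = d <;> by_cases h4 : Multiset.card μ = n₀ <;> simp [h3, h4]
  have stepB : e s = e s' := by
    refine my_coeff_unique _ _ ?_ ?_ ?_
    · -- finiteness
      have h1 := hB_regroup s 1
      simp only [ENNReal.coe_one, one_pow, mul_one] at h1
      rw [← h1]
      refine ne_top_of_le_ne_top (hfin s hs 1 1 le_rfl le_rfl) ?_
      refine ENNReal.tsum_le_tsum fun μ => ?_
      simp only [ENNReal.coe_one, one_pow, mul_one]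
      split_ifs <;> simp
    · have h1 := hB_regroup s' 1
      simp only [ENNReal.coe_one, one_pow, mul_one] at h1
      rw [← h1]
      refine ne_top_of_le_ne_top (hfin s' hs' 1 1 le_rfl le_rfl) ?_
      refine ENNReal.tsum_le_tsum fun μ => ?_
      simp only [ENNReal.coe_one, one_pow, mul_one]
      split_ifs <;> simp
    · intro X hX0 hX1
      lift X to ℝ≥0 using (hX1.trans_lt ENNReal.one_lt_top).ne with x hx
      have hx1 : x ≤ 1 := by exact_mod_cast hX1
      rw [← hB_regroup s x, ← hB_regroup s' x, stepA x hx1 n₀]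
  -- extraction at μ₀
  have hsup₀ : ∀ a ∈ μ₀, a ∈ F := fun a ha => Multiset.mem_toFinset.mpr ha
  set K : ℕ := (F.sup ι) + 1 with hK
  set G : Multiset I → ℕ → ℕ := fun ν j =>
    if hj : ∃ a ∈ F, ι a = j then ν.count hj.choose else 0 with hG
  have hGval : ∀ (ν : Multiset I) (a : I), a ∈ F → G ν (ι a) = ν.count a := by
    intro ν a haF
    have hex : ∃ a' ∈ F, ι a' = ι a := ⟨a, haF, rfl⟩
    rw [hG]
    simp only [dif_pos hex]
    congr 1
    exact hι hex.choose_spec.2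
  have hGsum : ∀ ν : Multiset I, (∀ a ∈ ν, a ∈ F) →
      ∑ j ∈ Finset.range K, G ν j * N ^ j = degw ν := by
    intro ν hν
    have h1 : degw ν = ∑ a ∈ F, ν.count a * N ^ ι a := by
      show (Multiset.map w ν).sum = _
      rw [Finset.sum_multiset_map_count]
      rw [Finset.sum_subset (fun a ha => Multiset.mem_toFinset.mp ha |> hν a)]
      · simp [hw, smul_eq_mul]
      · intro a _ ha
        rw [Multiset.count_eq_zero_of_notMem (fun hmem => ha (Multiset.mem_toFinset.mpr hmem))]
        simp
    have h2 : ∑ j ∈ Finset.range K, G ν j * N ^ j = ∑ j ∈ F.image ι, G ν j * N ^ j := by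
      symm
      refine Finset.sum_subset ?_ ?_
      · intro j hj
        obtain ⟨a, haF, rfl⟩ := Finset.mem_image.mp hj
        exact Finset.mem_range.mpr (Nat.lt_succ_of_le (Finset.le_sup haF))
      · intro j _ hj
        have : ¬ ∃ a ∈ F, ι a = j := by
          intro ⟨a, haF, hja⟩
          exact hj (Finset.mem_image.mpr ⟨a, haF, hja⟩)
        simp only [hG]
        simp [dif_neg this]
    have h3 : ∑ j ∈ F.image ι, G ν j * N ^ j = ∑ a ∈ F, ν.count a * N ^ ι a := by
      rw [Finset.sum_image (fun a _ a' _ hii => hι hii)]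
      refine Finset.sum_congr rfl fun a ha => ?_
      rw [hGval ν a ha]
    rw [h2, h3, h1]
  have hGlt : ∀ ν : Multiset I, Multiset.card ν = n₀ → ∀ j, G ν j < N := by
    intro ν hν j
    simp only [hG]
    split_ifs with hj
    · calc ν.count _ ≤ Multiset.card ν := Multiset.count_le_card _ _
        _ < N := by omega
    · omega
  have huniq : ∀ μ : Multiset I, Multiset.card μ = n₀ → degw μ = degw μ₀ →
      (∀ a ∈ μ, a ∈ F) → μ = μ₀ := by
    intro μ hcard hdeg hsup
    have hdig := my_digits N K (G μ) (G μ₀) (hGlt μ hcard) (hGlt μ₀ rfl)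
      (by rw [hGsum μ hsup, hGsum μ₀ hsup₀, hdeg])
    ext a
    by_cases haF : a ∈ F
    · have hlt : ι a < K := Nat.lt_succ_of_le (Finset.le_sup haF)
      have := hdig (ι a) hlt
      rwa [hGval μ a haF, hGval μ₀ a haF] at this
    · rw [Multiset.count_eq_zero_of_notMem (fun hm => haF (hsup a hm)),
        Multiset.count_eq_zero_of_notMem (fun hm => haF (hsup₀ a hm))]
  -- evaluate e at d₀ := degw μ₀
  have hsingle : ∀ r : Multiset I × J → ℝ≥0, e r (degw μ₀) = C r μ₀ := by
    intro r
    have hz : ∀ μ : Multiset I, μ ≠ μ₀ →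
        (if Multiset.card μ = n₀ ∧ degw μ = degw μ₀ then C r μ else 0) = 0 := by
      intro μ hμ
      by_cases hcond : Multiset.card μ = n₀ ∧ degw μ = degw μ₀
      · rw [if_pos hcond, hC]
        refine if_neg fun hsup => hμ (huniq μ hcond.1 hcond.2 hsup)
      · rw [if_neg hcond]
    show (∑' μ : Multiset I, if Multiset.card μ = n₀ ∧ degw μ = degw μ₀ then C r μ else 0)
      = C r μ₀
    rw [tsum_eq_single μ₀ hz, if_pos ⟨rfl, rfl⟩]
  have hfinal : C s μ₀ = C s' μ₀ := by
    rw [← hsingle s, ← hsingle s', stepB]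
  rw [hC] at hfinal
  simp only [if_pos hsup₀] at hfinal
  have hεpow0 : ((ε : ℝ≥0∞)) ^ Multiset.card μ₀ ≠ 0 := by
    exact pow_ne_zero _ (by exact_mod_cast hε0.ne')
  have hεpowtop : ((ε : ℝ≥0∞)) ^ Multiset.card μ₀ ≠ ⊤ := by
    exact ENNReal.pow_ne_top ENNReal.coe_ne_top
  have h1 := (ENNReal.mul_le_mul_iff_left hεpow0 hεpowtop).mp hfinal.le
  have h2 := (ENNReal.mul_le_mul_iff_left hεpow0 hεpowtop).mp hfinal.ge
  exact_mod_cast le_antisymm h1 h2
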